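/- For each 2 ≤ m ≤ N, the angular momentum function C^{(m)}(q,p) = ∑_{1 ≤ i < j ≤ m} (qᵢpⱼ − qⱼpᵢ)² Poisson-commutes with H_λ: {C^{(m)}, H_λ} = 0 wherever 1 + λq² ≠ 0. -/

import Mathlib

open Filter Topology

noncomputable def Hlam {N : ℕ} (lam om : ℝ) (q p : Fin N → ℝ) : ℝ :=
  ((∑ i, p i ^ 2) + om ^ 2 * ∑ i, q i ^ 2) / (2 * (1 + lam * ∑ i, q i ^ 2))


noncomputable def pbracket {N : ℕ} (F G : (Fin N → ℝ) → (Fin N → ℝ) → ℝ)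
    (q p : Fin N → ℝ) : ℝ :=
  ∑ k, (deriv (fun t => F (Function.update q k t) p) (q k)
          * deriv (fun t => G q (Function.update p k t)) (p k)
        - deriv (fun t => F q (Function.update p k t)) (p k)
          * deriv (fun t => G (Function.update q k t) p) (q k))

section aux

variable {N : ℕ} (lam om : ℝ) (q p : Fin N → ℝ) (k : Fin N)

lemma sum_sq_update (k : Fin N) (t : ℝ) :
    ∑ i, (Function.update q k t i) ^ 2
      = t ^ 2 + ∑ i ∈ Finset.univ.erase k, (q i) ^ 2 := by
  rw [← Finset.add_sum_erase _ (fun i => (Function.update q k t i) ^ 2) (Finset.mem_univ k)]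
  simp only [Function.update_self]
  congr 1
  refine Finset.sum_congr rfl fun i hi => ?_
  rw [Function.update_of_ne (Finset.mem_erase.mp hi).1]

lemma sq_erase (k : Fin N) :
    (q k) ^ 2 + ∑ i ∈ Finset.univ.erase k, (q i) ^ 2 = ∑ i, (q i) ^ 2 := by
  have := sum_sq_update q k (q k)
  simpa [Function.update_eq_self] using this.symm

/-- derivative of H in a q-coordinate has the form `q k * A` -/
lemma derivH_q (h : 1 + lam * ∑ i, q i ^ 2 ≠ 0) :
    deriv (fun t => Hlam lam om (Function.update q k t) p) (q k)
      = q k * (((om ^ 2 * 2) * (2 * (1 + lam * ∑ i, q i ^ 2))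
          - ((∑ i, p i ^ 2) + om ^ 2 * ∑ i, q i ^ 2) * (2 * (lam * 2)))
          / (2 * (1 + lam * ∑ i, q i ^ 2)) ^ 2) := by
  set c := ∑ i ∈ Finset.univ.erase k, (q i) ^ 2 with hc
  have hck : (q k) ^ 2 + c = ∑ i, (q i) ^ 2 := sq_erase q k
  have hfun : (fun t => Hlam lam om (Function.update q k t) p)
      = fun t => ((∑ i, p i ^ 2) + om ^ 2 * (t ^ 2 + c)) / (2 * (1 + lam * (t ^ 2 + c))) := by
    funext t
    simp only [Hlam, sum_sq_update q k t, hc]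
  have hnum : HasDerivAt (fun t : ℝ => (∑ i, p i ^ 2) + om ^ 2 * (t ^ 2 + c))
      (om ^ 2 * (2 * q k)) (q k) := by
    have := (((hasDerivAt_pow 2 (q k)).add_const c).const_mul (om ^ 2)).const_add
      (∑ i, p i ^ 2)
    refine this.congr_deriv ?_
    push_cast; ring
  have hden : HasDerivAt (fun t : ℝ => 2 * (1 + lam * (t ^ 2 + c)))
      (2 * (lam * (2 * q k))) (q k) := by
    have := ((((hasDerivAt_pow 2 (q k)).add_const c).const_mul lam).const_add 1).const_mul 2
    refine this.congr_deriv ?_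
    push_cast; ring
  have hg : 2 * (1 + lam * ((q k) ^ 2 + c)) ≠ 0 := by
    rw [hck]
    intro hz
    apply h
    have := mul_eq_zero.mp hz
    rcases this with h2 | h2
    · norm_num at h2
    · exact h2
  have hdiv := hnum.fun_div hden hg
  rw [hfun, hdiv.deriv, hck]
  field_simp

/-- derivative of H in a p-coordinate has the form `p k * D` -/
lemma derivH_p :
    deriv (fun t => Hlam lam om q (Function.update p k t)) (p k)
      = p k * (2 / (2 * (1 + lam * ∑ i, q i ^ 2))) := by
  set c := ∑ i ∈ Finset.univ.erase k, (p i) ^ 2 with hc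
  have hck : (p k) ^ 2 + c = ∑ i, (p i) ^ 2 := sq_erase p k
  have hfun : (fun t => Hlam lam om q (Function.update p k t))
      = fun t => (t ^ 2 + (c + om ^ 2 * ∑ i, q i ^ 2))
          / (2 * (1 + lam * ∑ i, q i ^ 2)) := by
    funext t
    simp only [Hlam, sum_sq_update p k t, hc]
    ring_nf
  have hnum : HasDerivAt
      (fun t : ℝ => (t ^ 2 + (c + om ^ 2 * ∑ i, q i ^ 2))
        / (2 * (1 + lam * ∑ i, q i ^ 2)))
      ((2 * p k) / (2 * (1 + lam * ∑ i, q i ^ 2))) (p k) := by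
    have := ((hasDerivAt_pow 2 (p k)).add_const
      (c + om ^ 2 * ∑ i, q i ^ 2)).div_const (2 * (1 + lam * ∑ i, q i ^ 2))
    refine this.congr_deriv ?_
    push_cast; ring
  rw [hfun, hnum.deriv]
  ring

/-- derivative of one angular-momentum term in a q-coordinate -/
lemma termC_q (i j : Fin N) :
    HasDerivAt
      (fun t => (Function.update q k t i * p j - Function.update q k t j * p i) ^ 2)
      (2 * (q i * p j - q j * p i)
        * ((if i = k then p j else 0) - (if j = k then p i else 0))) (q k) := by
  set a := (if i = k then p j else 0) - (if j = k then p i else 0) with ha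
  set b := (if i = k then 0 else q i * p j) - (if j = k then 0 else q j * p i) with hb
  have hfun : (fun t => (Function.update q k t i * p j - Function.update q k t j * p i) ^ 2)
      = fun t => (a * t + b) ^ 2 := by
    funext t
    simp only [Function.update_apply, ha, hb]
    split_ifs <;> ring
  have hd : HasDerivAt (fun t : ℝ => (a * t + b) ^ 2)
      ((2 : ℕ) * (a * q k + b) ^ 1 * (a * 1)) (q k) :=
    (((hasDerivAt_id (q k)).const_mul a).add_const b).pow 2
  rw [hfun]
  convert hd using 1
  simp only [ha, hb]
  split_ifs with h1 h2 h2 <;> [subst h1; subst h1; skip; skip] <;>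
    [subst h2; skip; subst h2; skip] <;> push_cast <;> ring

/-- derivative of one angular-momentum term in a p-coordinate -/
lemma termC_p (i j : Fin N) :
    HasDerivAt
      (fun t => (q i * Function.update p k t j - q j * Function.update p k t i) ^ 2)
      (2 * (q i * p j - q j * p i)
        * ((if j = k then q i else 0) - (if i = k then q j else 0))) (p k) := by
  set a := (if j = k then q i else 0) - (if i = k then q j else 0) with ha
  set b := (if j = k then 0 else q i * p j) - (if i = k then 0 else q j * p i) with hb
  have hfun : (fun t => (q i * Function.update p k t j - q j * Function.update p k t i) ^ 2)
      = fun t => (a * t + b) ^ 2 := by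
    funext t
    simp only [Function.update_apply, ha, hb]
    split_ifs <;> ring
  have hd : HasDerivAt (fun t : ℝ => (a * t + b) ^ 2)
      ((2 : ℕ) * (a * p k + b) ^ 1 * (a * 1)) (p k) :=
    (((hasDerivAt_id (p k)).const_mul a).add_const b).pow 2
  rw [hfun]
  convert hd using 1
  simp only [ha, hb]
  split_ifs with h1 h2 h2 <;> [subst h1; subst h1; skip; skip] <;>
    [subst h2; skip; subst h2; skip] <;> push_cast <;> ring

lemma derivC_q (m : ℕ) :
    deriv (fun t => ∑ i : Fin N, ∑ j : Fin N,
      if (i : ℕ) < (j : ℕ) ∧ (j : ℕ) < m then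
        (Function.update q k t i * p j - Function.update q k t j * p i) ^ 2 else 0) (q k)
    = ∑ i : Fin N, ∑ j : Fin N,
      if (i : ℕ) < (j : ℕ) ∧ (j : ℕ) < m then
        2 * (q i * p j - q j * p i)
          * ((if i = k then p j else 0) - (if j = k then p i else 0)) else 0 := by
  refine HasDerivAt.deriv ?_
  refine HasDerivAt.fun_sum fun i _ => HasDerivAt.fun_sum fun j _ => ?_
  by_cases hP : (i : ℕ) < (j : ℕ) ∧ (j : ℕ) < m
  · simp only [if_pos hP]
    exact termC_q q p k i j
  · simp only [if_neg hP]
    exact hasDerivAt_const _ _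

lemma derivC_p (m : ℕ) :
    deriv (fun t => ∑ i : Fin N, ∑ j : Fin N,
      if (i : ℕ) < (j : ℕ) ∧ (j : ℕ) < m then
        (q i * Function.update p k t j - q j * Function.update p k t i) ^ 2 else 0) (p k)
    = ∑ i : Fin N, ∑ j : Fin N,
      if (i : ℕ) < (j : ℕ) ∧ (j : ℕ) < m then
        2 * (q i * p j - q j * p i)
          * ((if j = k then q i else 0) - (if i = k then q j else 0)) else 0 := by
  refine HasDerivAt.deriv ?_
  refine HasDerivAt.fun_sum fun i _ => HasDerivAt.fun_sum fun j _ => ?_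
  by_cases hP : (i : ℕ) < (j : ℕ) ∧ (j : ℕ) < m
  · simp only [if_pos hP]
    exact termC_p q p k i j
  · simp only [if_neg hP]
    exact hasDerivAt_const _ _

end aux

theorem stmt_3 {N : ℕ} (lam om : ℝ) (m : ℕ) (hm2 : 2 ≤ m) (hmN : m ≤ N)
    (q p : Fin N → ℝ) (h : 1 + lam * ∑ k, q k ^ 2 ≠ 0) :
    pbracket
      (fun q p => ∑ i : Fin N, ∑ j : Fin N,
        if (i : ℕ) < (j : ℕ) ∧ (j : ℕ) < m then (q i * p j - q j * p i) ^ 2 else 0)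
      (Hlam lam om) q p = 0 := by
  set A := (((om ^ 2 * 2) * (2 * (1 + lam * ∑ i, q i ^ 2))
      - ((∑ i, p i ^ 2) + om ^ 2 * ∑ i, q i ^ 2) * (2 * (lam * 2)))
      / (2 * (1 + lam * ∑ i, q i ^ 2)) ^ 2) with hA
  set D := (2 / (2 * (1 + lam * ∑ i, q i ^ 2))) with hD
  have hrw : pbracket
      (fun q p => ∑ i : Fin N, ∑ j : Fin N,
        if (i : ℕ) < (j : ℕ) ∧ (j : ℕ) < m then (q i * p j - q j * p i) ^ 2 else 0)
      (Hlam lam om) q p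
      = ∑ k, ((∑ i : Fin N, ∑ j : Fin N,
          if (i : ℕ) < (j : ℕ) ∧ (j : ℕ) < m then
            2 * (q i * p j - q j * p i)
              * ((if i = k then p j else 0) - (if j = k then p i else 0)) else 0)
          * (p k * D)
        - (∑ i : Fin N, ∑ j : Fin N,
          if (i : ℕ) < (j : ℕ) ∧ (j : ℕ) < m then
            2 * (q i * p j - q j * p i)
              * ((if j = k then q i else 0) - (if i = k then q j else 0)) else 0)
          * (q k * A)) := by
    unfold pbracket
    refine Finset.sum_congr rfl fun k _ => ?_
    rw [derivC_q q p k m, derivC_p q p k m, derivH_q lam om q p k h, derivH_p lam om q p k]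
  rw [hrw]
  rw [Finset.sum_sub_distrib]
  have h1 : ∑ k, (∑ i : Fin N, ∑ j : Fin N,
      if (i : ℕ) < (j : ℕ) ∧ (j : ℕ) < m then
        2 * (q i * p j - q j * p i)
          * ((if i = k then p j else 0) - (if j = k then p i else 0)) else 0)
      * (p k * D) = 0 := by
    simp only [Finset.sum_mul]
    rw [Finset.sum_comm]
    refine Finset.sum_eq_zero fun i _ => ?_
    rw [Finset.sum_comm]
    refine Finset.sum_eq_zero fun j _ => ?_
    by_cases hP : (i : ℕ) < (j : ℕ) ∧ (j : ℕ) < m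
    · simp only [if_pos hP, mul_sub, sub_mul, ite_mul, zero_mul, mul_ite, mul_zero]
      rw [Finset.sum_sub_distrib]
      simp [Finset.sum_ite_eq]
      ring
    · simp only [if_neg hP, zero_mul, Finset.sum_const_zero]
  have h2 : ∑ k, (∑ i : Fin N, ∑ j : Fin N,
      if (i : ℕ) < (j : ℕ) ∧ (j : ℕ) < m then
        2 * (q i * p j - q j * p i)
          * ((if j = k then q i else 0) - (if i = k then q j else 0)) else 0)
      * (q k * A) = 0 := by
    simp only [Finset.sum_mul]
    rw [Finset.sum_comm]
    refine Finset.sum_eq_zero fun i _ => ?_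
    rw [Finset.sum_comm]
    refine Finset.sum_eq_zero fun j _ => ?_
    by_cases hP : (i : ℕ) < (j : ℕ) ∧ (j : ℕ) < m
    · simp only [if_pos hP, mul_sub, sub_mul, ite_mul, zero_mul, mul_ite, mul_zero]
      rw [Finset.sum_sub_distrib]
      simp [Finset.sum_ite_eq]
      ring
    · simp only [if_neg hP, zero_mul, Finset.sum_const_zero]
  rw [h1, h2, sub_zero]
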